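/- Let K be the lens formed as the intersection of two closed disks of equal radius, symmetric about the x-axis, with the two corner points a and b on the x-axis, and suppose the lens is thin enough that the angle of each circular arc at its endpoints with segment ab is less than 30°. Let m be the midpoint of the upper arc. Then for any three points p, q, r on ∂K listed in order of increasing x-coordinate, |pq| + |qr| ≤ |am| + |mb|. -/

import Mathlib

open Metric EuclideanGeometry Real

private lemma lens_dist2 (x y : EuclideanSpace ℝ (Fin 2)) :
    dist x y = Real.sqrt ((x 0 - y 0)^2 + (x 1 - y 1)^2) := by
  rw [EuclideanSpace.dist_eq, Fin.sum_univ_two]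
  simp [Real.dist_eq, sq_abs]

private lemma lens_inner (x y : EuclideanSpace ℝ (Fin 2)) :
    (inner ℝ x y : ℝ) = x 0 * y 0 + x 1 * y 1 := by
  rw [PiLp.inner_apply, Fin.sum_univ_two]; simp [RCLike.inner_apply]; ring

private lemma lens_sphere_eq {x y : EuclideanSpace ℝ (Fin 2)} {R : ℝ}
    (h : x ∈ Metric.sphere y R) : (x 0 - y 0)^2 + (x 1 - y 1)^2 = R^2 := by
  have h' : dist x y = R := h
  rw [lens_dist2] at h'
  have hE : (0:ℝ) ≤ (x 0 - y 0)^2 + (x 1 - y 1)^2 := by positivity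
  rw [← h', Real.sq_sqrt hE]

private lemma lens_ball_le {x y : EuclideanSpace ℝ (Fin 2)} {R : ℝ}
    (h : x ∈ Metric.closedBall y R) : (x 0 - y 0)^2 + (x 1 - y 1)^2 ≤ R^2 := by
  have h' : dist x y ≤ R := h
  rw [lens_dist2] at h'
  have hE : (0:ℝ) ≤ (x 0 - y 0)^2 + (x 1 - y 1)^2 := by positivity
  nlinarith [Real.sq_sqrt hE, Real.sqrt_nonneg ((x 0 - y 0)^2 + (x 1 - y 1)^2)]

private lemma lens_keyB {c d p0 p1 q0 q1 : ℝ} (hc : 0 < c) (hd : 0 < d)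
    (hcd : 3*c^2 ≤ d^2)
    (hp : 2*d*|p1| ≤ c^2 - p0^2) (hq : 2*d*|q1| ≤ c^2 - q0^2)
    (hpq : p0 ≤ q0) :
    (q0 - p0)^2 + (q1 - p1)^2 ≤ (q0 + c)^2 + q1^2 := by
  have hp0 : p0^2 ≤ c^2 := by nlinarith [abs_nonneg p1]
  have hq0 : q0^2 ≤ c^2 := by nlinarith [abs_nonneg q1]
  have hA : 0 ≤ c + p0 := by nlinarith
  have hB : 0 ≤ c + q0 := by nlinarith
  have hAB : c + p0 ≤ c + q0 := by linarith
  have hp' : d * |p1| ≤ (c + p0) * c := by nlinarith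
  have hq' : d * |q1| ≤ (c + q0) * c := by nlinarith
  have key : 2 * (|p1| * |q1|) + p1^2 ≤ (c + p0) * (c + q0) := by
    have h1 : (d*|p1|) * (d*|q1|) ≤ ((c+p0)*c) * ((c+q0)*c) :=
      mul_le_mul hp' hq' (by positivity) (by positivity)
    have h2 : (d*|p1|) * (d*|p1|) ≤ ((c+p0)*c) * ((c+q0)*c) := by
      nlinarith [mul_le_mul hp' hp' (by positivity : (0:ℝ) ≤ d * |p1|)
        (by positivity : (0:ℝ) ≤ (c+p0)*c),
        mul_nonneg (mul_nonneg hA hc.le) (mul_nonneg hc.le (sub_nonneg.2 hAB))]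
    have hd2 : (0:ℝ) < d^2 := by positivity
    nlinarith [sq_abs p1, mul_nonneg (mul_nonneg hA hB) (sub_nonneg.2 hcd)]
  nlinarith [sq_abs p1, neg_abs_le (p1*q1), abs_mul p1 q1,
    mul_nonneg hA (sub_nonneg.2 hpq)]

private lemma lens_sqrt_aux {X Y Z W : ℝ} (hX : 0 ≤ X) (hY : 0 ≤ Y) (hW : 0 ≤ W)
    (hXY : X*Y ≤ W^2) (hsum : X + Y + 2*W ≤ 4*Z) :
    Real.sqrt X + Real.sqrt Y ≤ 2 * Real.sqrt Z := by
  have hZ : 0 ≤ Z := by linarith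
  have h1 : Real.sqrt X * Real.sqrt Y ≤ W := by
    rw [← Real.sqrt_mul hX]
    calc Real.sqrt (X*Y) ≤ Real.sqrt (W^2) := Real.sqrt_le_sqrt hXY
      _ = W := Real.sqrt_sq hW
  have h2 : (Real.sqrt X + Real.sqrt Y)^2 ≤ (2 * Real.sqrt Z)^2 := by
    have hx2 := Real.sq_sqrt hX
    have hy2 := Real.sq_sqrt hY
    have hz2 := Real.sq_sqrt hZ
    nlinarith
  have h3 : 0 ≤ Real.sqrt X + Real.sqrt Y := by positivity
  have h4 : 0 ≤ 2 * Real.sqrt Z := by positivity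
  nlinarith

private lemma lens_keyA {c d e q0 q1 : ℝ} (hd : 0 < d) (he : 0 < e)
    (hcde : c^2 = e^2 + 2*e*d)
    (hq : q0^2 + q1^2 + 2*q1*d = c^2) (hq1 : 0 ≤ q1) :
    Real.sqrt ((q0 + c)^2 + q1^2) + Real.sqrt ((q0 - c)^2 + q1^2)
      ≤ 2 * Real.sqrt (c^2 + e^2) := by
  have hq1e : q1 ≤ e := by nlinarith [sq_nonneg q0]
  refine lens_sqrt_aux (by positivity) (by positivity)
    (W := c^2 + 2*e^2 - q0^2 - q1^2) (by nlinarith [sq_nonneg e]) ?_ (by nlinarith)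
  nlinarith [sq_nonneg q1, mul_nonneg hq1 (sub_nonneg.2 hq1e), sq_nonneg (q1 - e),
    mul_nonneg (mul_nonneg hq1 hq1) hd.le, mul_nonneg hq1 hd.le,
    mul_nonneg (mul_nonneg hq1 (sub_nonneg.2 hq1e)) hd.le]

private lemma lens_pos_sqrt_eq {x R : ℝ} (hx : 0 < x) (hR : 0 < R)
    (h : x^2 = R^2) : x = R := by nlinarith

private lemma lens_hcd {R c d : ℝ} (hc : 0 < c) (hR : 0 < R) (h1 : c < R/2)
    (h2 : c^2 + d^2 = R^2) : 3*c^2 ≤ d^2 := by nlinarith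

private lemma lens_habs {c d R x0 x1 : ℝ} (hd : 0 < d) (hcd2 : c^2 + d^2 = R^2)
    (h1 : (x0 - 0)^2 + (x1 - d)^2 ≤ R^2) (h2 : (x0 - 0)^2 + (x1 - -d)^2 ≤ R^2) :
    2*d*|x1| ≤ c^2 - x0^2 := by
  rcases abs_cases x1 with ⟨h, _⟩ | ⟨h, _⟩ <;> rw [h] <;> nlinarith [sq_nonneg x1]

private lemma lens_sign_lower {d R x0 x1 : ℝ} (hd : 0 < d)
    (hs : (x0 - 0)^2 + (x1 - d)^2 = R^2) (hb : (x0 - 0)^2 + (x1 - -d)^2 ≤ R^2) :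
    x1 ≤ 0 := by nlinarith

private lemma lens_sign_upper {d R x0 x1 : ℝ} (hd : 0 < d)
    (hs : (x0 - 0)^2 + (x1 - -d)^2 = R^2) (hb : (x0 - 0)^2 + (x1 - d)^2 ≤ R^2) :
    0 ≤ x1 := by nlinarith

/-- Let `K` be the lens formed as the intersection of two closed disks of equal radius
`R`, with centers `o₁` (upper) and `o₂` (lower) symmetric about the `x`-axis, whose
boundary circles meet at the two points `a`, `b` on the `x`-axis. Suppose the lens is
thin enough that the angle of each arc at its endpoints with the chord `ab` is less than
`30°` (equivalently, each angle between a radius to an endpoint and the chord exceeds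
`60°`). Let `m` be the midpoint of the upper arc (the topmost point, on the circle
centered at `o₂`). Then for any three points `p, q, r` on `∂K`, listed in order of
increasing `x`-coordinate, `|pq| + |qr| ≤ |am| + |mb|`. -/
theorem stmt19 (R : ℝ) (hR : 0 < R) (o₁ o₂ : EuclideanSpace ℝ (Fin 2))
    (ho₁x : o₁ 0 = 0) (ho₂x : o₂ 0 = 0) (hsym : o₁ 1 = -(o₂ 1)) (ho₁up : 0 < o₁ 1)
    (K : Set (EuclideanSpace ℝ (Fin 2))) (hK : K = closedBall o₁ R ∩ closedBall o₂ R)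
    (a b : EuclideanSpace ℝ (Fin 2))
    (ha₁ : a ∈ sphere o₁ R) (ha₂ : a ∈ sphere o₂ R) (hay : a 1 = 0)
    (hb₁ : b ∈ sphere o₁ R) (hb₂ : b ∈ sphere o₂ R) (hby : b 1 = 0)
    (hab : a 0 < b 0)
    (hthin₁ : π / 3 < ∠ o₂ a b) (hthin₂ : π / 3 < ∠ o₂ b a)
    (hthin₃ : π / 3 < ∠ o₁ a b) (hthin₄ : π / 3 < ∠ o₁ b a)
    (m : EuclideanSpace ℝ (Fin 2)) (hm : m ∈ sphere o₂ R) (hmx : m 0 = 0)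
    (hmy : 0 < m 1)
    (p q r : EuclideanSpace ℝ (Fin 2))
    (hp : p ∈ frontier K) (hq : q ∈ frontier K) (hr : r ∈ frontier K)
    (hpq : p 0 ≤ q 0) (hqr : q 0 ≤ r 0) :
    dist p q + dist q r ≤ dist a m + dist m b := by
  obtain ⟨c, hc_def⟩ : ∃ c, b 0 = c := ⟨_, rfl⟩
  obtain ⟨d, hd_def⟩ : ∃ d, o₁ 1 = d := ⟨_, rfl⟩
  obtain ⟨e, he_def⟩ : ∃ e, m 1 = e := ⟨_, rfl⟩
  have hd : 0 < d := hd_def ▸ ho₁up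
  have he : 0 < e := he_def ▸ hmy
  have ho₂y : o₂ 1 = -d := by rw [← hd_def]; linarith [hsym]
  -- sphere equations
  have hbo1 : c^2 + d^2 = R^2 := by
    have h := lens_sphere_eq hb₁
    rw [ho₁x, hby, hc_def, hd_def] at h
    linear_combination h
  have hao1 : (a 0)^2 + d^2 = R^2 := by
    have h := lens_sphere_eq ha₁
    rw [ho₁x, hay, hd_def] at h
    linear_combination h
  have ha0 : a 0 = -c := by
    have hsq : (a 0 - c) * (a 0 + c) = 0 := by linear_combination hao1 - hbo1
    rcases mul_eq_zero.mp hsq with h | h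
    · rw [hc_def] at hab; linarith
    · linarith
  have hc : 0 < c := by rw [hc_def] at hab; linarith
  -- m gives e = R - d
  have hmRd : e + d = R := by
    have h := lens_sphere_eq hm
    rw [ho₂x, ho₂y, hmx, he_def] at h
    exact lens_pos_sqrt_eq (by linarith) hR (by linear_combination h)
  have hcde : c^2 = e^2 + 2*e*d := by linear_combination hbo1 - (e + d + R) * hmRd
  -- thinness: c < R/2
  have hcR : c < R / 2 := by
    have hn1 : ‖o₂ - a‖ = R := by
      rw [← dist_eq_norm, dist_comm]; exact ha₂
    have hn2 : ‖b - a‖ = 2*c := by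
      rw [← dist_eq_norm, lens_dist2]
      have h : (b 0 - a 0)^2 + (b 1 - a 1)^2 = (2*c)^2 := by
        rw [hay, hby, ha0, hc_def]; ring
      rw [h, Real.sqrt_sq (by positivity)]
    have hin : (inner ℝ (o₂ - a) (b - a) : ℝ) = 2*c^2 := by
      have e0 : (o₂ - a) 0 = c := by
        show o₂ 0 - a 0 = c; rw [ho₂x, ha0]; ring
      have e1 : (o₂ - a) 1 = -d := by
        show o₂ 1 - a 1 = -d; rw [ho₂y, hay]; ring
      have f0 : (b - a) 0 = 2*c := by
        show b 0 - a 0 = 2*c; rw [ha0, hc_def]; ring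
      have f1 : (b - a) 1 = 0 := by
        show b 1 - a 1 = 0; rw [hby, hay]; ring
      rw [lens_inner, e0, e1, f0, f1]; ring
    have hcos : Real.cos (∠ o₂ a b) = c / R := by
      rw [EuclideanGeometry.angle, InnerProductGeometry.cos_angle]
      rw [show o₂ -ᵥ a = o₂ - a from rfl, show b -ᵥ a = b - a from rfl]
      rw [hin, hn1, hn2]
      field_simp
    have hlt : Real.cos (∠ o₂ a b) < Real.cos (π/3) :=
      Real.strictAntiOn_cos ⟨by positivity, by linarith [Real.pi_pos]⟩
        ⟨EuclideanGeometry.angle_nonneg _ _ _, EuclideanGeometry.angle_le_pi _ _ _⟩ hthin₁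
    rw [Real.cos_pi_div_three, hcos, div_lt_iff₀ hR] at hlt
    linarith
  have hcd : 3*c^2 ≤ d^2 := lens_hcd hc hR hcR hbo1
  -- frontier facts
  have hKclosed : IsClosed K := by
    rw [hK]; exact IsClosed.inter isClosed_closedBall isClosed_closedBall
  have hKsub : frontier K ⊆ K := by
    have h := frontier_subset_closure (s := K)
    rwa [hKclosed.closure_eq] at h
  have habs : ∀ x ∈ K, 2*d*|x 1| ≤ c^2 - (x 0)^2 := by
    intro x hx
    rw [hK] at hx
    have h1 := lens_ball_le hx.1
    have h2 := lens_ball_le hx.2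
    rw [ho₁x, hd_def] at h1
    rw [ho₂x, ho₂y] at h2
    exact lens_habs hd hbo1 h1 h2
  have hpK := hKsub hp
  have hqK := hKsub hq
  have hrK := hKsub hr
  have habp := habs p hpK
  have habq := habs q hqK
  have habr := habs r hrK
  -- |pq| ≤ |aq|
  have step1 : dist p q ≤ dist a q := by
    rw [lens_dist2, lens_dist2]
    apply Real.sqrt_le_sqrt
    have h := lens_keyB hc hd hcd habp habq hpq
    rw [ha0, hay]
    have e1 : (p 0 - q 0)^2 + (p 1 - q 1)^2 = (q 0 - p 0)^2 + (q 1 - p 1)^2 := by ring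
    have e2 : (-c - q 0)^2 + (0 - q 1)^2 = (q 0 + c)^2 + (q 1)^2 := by ring
    rw [e1, e2]
    exact h
  -- |qr| ≤ |qb|
  have step2 : dist q r ≤ dist q b := by
    rw [lens_dist2, lens_dist2]
    apply Real.sqrt_le_sqrt
    have habr' : 2*d*|r 1| ≤ c^2 - (-(r 0))^2 := by rw [neg_sq]; exact habr
    have habq' : 2*d*|q 1| ≤ c^2 - (-(q 0))^2 := by rw [neg_sq]; exact habq
    have h := lens_keyB hc hd hcd habr' habq' (neg_le_neg hqr)
    rw [hby, hc_def]
    have e1 : (q 0 - r 0)^2 + (q 1 - r 1)^2 = (-(q 0) - -(r 0))^2 + (q 1 - r 1)^2 := by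
      ring
    have e2 : (q 0 - c)^2 + (q 1 - 0)^2 = (-(q 0) + c)^2 + (q 1)^2 := by ring
    rw [e1, e2]
    exact h
  -- |aq| + |qb| ≤ |am| + |mb|
  have step3 : dist a q + dist q b ≤ dist a m + dist m b := by
    have ham : dist a m = Real.sqrt (c^2 + e^2) := by
      rw [lens_dist2, ha0, hay, hmx, he_def]
      congr 1; ring
    have hmb : dist m b = Real.sqrt (c^2 + e^2) := by
      rw [lens_dist2, hby, hmx, hc_def, he_def]
      congr 1; ring
    have haq : dist a q = Real.sqrt ((q 0 + c)^2 + (q 1)^2) := by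
      rw [lens_dist2, ha0, hay]
      congr 1; ring
    have hqb : dist q b = Real.sqrt ((q 0 - c)^2 + (q 1)^2) := by
      rw [lens_dist2, hby, hc_def]
      congr 1; ring
    rw [ham, hmb, haq, hqb, ← two_mul]
    -- q is on one of the two spheres
    have hqs : q ∈ Metric.sphere o₁ R ∪ Metric.sphere o₂ R := by
      have h1 : frontier K ⊆ frontier (closedBall o₁ R) ∩ closure (closedBall o₂ R) ∪
          closure (closedBall o₁ R) ∩ frontier (closedBall o₂ R) := by
        rw [hK]; exact frontier_inter_subset _ _
      rcases h1 hq with h | h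
      · left; rw [← frontier_closedBall o₁ (ne_of_gt hR)]; exact h.1
      · right; rw [← frontier_closedBall o₂ (ne_of_gt hR)]; exact h.2
    have hqK' : q ∈ closedBall o₁ R ∩ closedBall o₂ R := hK ▸ hqK
    have hb1 := lens_ball_le hqK'.1
    have hb2 := lens_ball_le hqK'.2
    rw [ho₁x, hd_def] at hb1
    rw [ho₂x, ho₂y] at hb2
    rcases hqs with hqs | hqs
    · -- lower arc: q 1 ≤ 0
      have hsph := lens_sphere_eq hqs
      rw [ho₁x, hd_def] at hsph
      have hq1 : q 1 ≤ 0 := lens_sign_lower hd hsph hb2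
      have hrel : (q 0)^2 + (-(q 1))^2 + 2*(-(q 1))*d = c^2 := by
        linear_combination hsph - hbo1
      have h := lens_keyA hd he hcde hrel (by linarith)
      rw [neg_sq] at h
      exact h
    · -- upper arc: q 1 ≥ 0
      have hsph := lens_sphere_eq hqs
      rw [ho₂x, ho₂y] at hsph
      have hq1 : 0 ≤ q 1 := lens_sign_upper hd hsph hb1
      have hrel : (q 0)^2 + (q 1)^2 + 2*(q 1)*d = c^2 := by
        linear_combination hsph - hbo1
      exact lens_keyA hd he hcde hrel hq1
  calc dist p q + dist q r ≤ dist a q + dist q b := add_le_add step1 step2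
    _ ≤ dist a m + dist m b := step3
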